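/- Fix β₀, β₁, …, β_N ∈ ℂ with |β_i| > 1 for every i, and for h ∈ ℂ \ {0} define M̃_i(h) = [[h, √h / conj(β_i)], [√h / β_i, 1]] and Z̃^{(N)}(h) = Tr( M̃_N(h) · M̃_{N-1}(h) ⋯ M̃_0(h) ). Let α_i = 1/β_i (so |α_i| < 1) and let T_{N+1}(h) = ∏_{j=N}^{0} (1 − |α_j|²)^{-1/2} · [[h, −conj(α_j)], [−α_j h, 1]] be the (N+1)-step CMV transfer matrix with Verblunsky coefficients (α_i). Then h is a zero of Z̃^{(N)} if and only if h is a zero of Tr(T_{N+1}(h)). -/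

import Mathlib

open scoped ComplexConjugate

/-- The Szegő transfer matrix `T(z, α) = (1 − |α|²)^{-1/2} · [[z, −conj α], [−α z, 1]]`. -/
noncomputable def szego (z α : ℂ) : Matrix (Fin 2) (Fin 2) ℂ :=
  ((Real.sqrt (1 - ‖α‖ ^ 2) : ℂ))⁻¹ • !![z, -conj α; -α * z, 1]

/-- The product `f N * f (N-1) * ⋯ * f 0` of a finite family of 2×2 matrices
(index `N` leftmost). -/
noncomputable def prodRev {N : ℕ} (f : Fin (N + 1) → Matrix (Fin 2) (Fin 2) ℂ) :
    Matrix (Fin 2) (Fin 2) ℂ :=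
  ((List.ofFn f).reverse).prod

lemma prodRev_one (f : Fin 1 → Matrix (Fin 2) (Fin 2) ℂ) : prodRev f = f 0 := by
  simp [prodRev, List.ofFn_succ]

lemma prodRev_succ {N : ℕ} (f : Fin (N + 2) → Matrix (Fin 2) (Fin 2) ℂ) :
    prodRev f = prodRev (fun i => f i.succ) * f 0 := by
  simp [prodRev, List.ofFn_succ, Matrix.mul_assoc]

lemma prodRev_smul : ∀ {N : ℕ} (c : Fin (N + 1) → ℂ) (A : Fin (N + 1) → Matrix (Fin 2) (Fin 2) ℂ),
    prodRev (fun i => c i • A i) = (∏ i, c i) • prodRev A := by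
  intro N
  induction N with
  | zero => intro c A; simp [prodRev_one]
  | succ n ih =>
    intro c A
    rw [prodRev_succ, prodRev_succ (fun i => A i), ih (fun i => c i.succ) (fun i => A i.succ),
      smul_mul_assoc, mul_smul_comm, smul_smul]
    congr 1
    simp only [Fin.prod_univ_succ]
    ring

lemma prodRev_conj {N : ℕ} (P Q : Matrix (Fin 2) (Fin 2) ℂ) (hQP : Q * P = 1)
    (A : Fin (N + 1) → Matrix (Fin 2) (Fin 2) ℂ) :
    prodRev (fun i => P * A i * Q) = P * prodRev A * Q := by
  induction N with
  | zero => simp [prodRev_one]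
  | succ n ih =>
    rw [prodRev_succ, prodRev_succ A, ih (fun i => A i.succ)]
    simp only [Matrix.mul_assoc]
    rw [← Matrix.mul_assoc Q P, hQP, Matrix.one_mul]

/-- For `β₀, …, β_N` of modulus `> 1`, `h ≠ 0` and a fixed branch `s` of `√h`
(`s² = h`), the trace of `M̃_N(h)⋯M̃_0(h)` with `M̃ᵢ(h) = [[h, √h/conj βᵢ], [√h/βᵢ, 1]]`
vanishes exactly when the trace of the `(N+1)`-step CMV transfer matrix `T_{N+1}(h)` with
Verblunsky coefficients `αᵢ = 1/βᵢ` vanishes. -/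
theorem stmt8 (N : ℕ) (β : Fin (N + 1) → ℂ) (hβ : ∀ i, 1 < ‖β i‖)
    (h : ℂ) (hh : h ≠ 0) (s : ℂ) (hs : s ^ 2 = h) :
    Matrix.trace (prodRev fun i => !![h, s / conj (β i); s / β i, 1]) = 0 ↔
    Matrix.trace (prodRev fun i => szego h ((β i)⁻¹)) = 0 := by
  have hs0 : s ≠ 0 := by
    intro h0; apply hh; rw [← hs, h0]; ring
  have hβ0 : ∀ i, β i ≠ 0 := fun i => by
    intro h0; have := hβ i; rw [h0] at this; simp at this; linarith
  set P : Matrix (Fin 2) (Fin 2) ℂ := !![1, 0; 0, -s] with hP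
  set Q : Matrix (Fin 2) (Fin 2) ℂ := !![1, 0; 0, -s⁻¹] with hQ
  have hQP : Q * P = 1 := by
    rw [hP, hQ]
    ext i j
    fin_cases i <;> fin_cases j <;>
      simp [Matrix.mul_apply, Fin.sum_univ_succ, inv_mul_cancel₀ hs0]
  set A : Fin (N + 1) → Matrix (Fin 2) (Fin 2) ℂ :=
    fun i => !![h, -conj ((β i)⁻¹); -(β i)⁻¹ * h, 1] with hA
  have key : ∀ i, P * !![h, s / conj (β i); s / β i, 1] * Q = A i := by
    intro i
    have hc : conj (β i) ≠ 0 := by simpa using hβ0 i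
    rw [hP, hQ, hA]
    ext x y
    fin_cases x <;> fin_cases y <;>
      simp [Matrix.mul_apply, Fin.sum_univ_succ, map_inv₀] <;>
      field_simp <;> ring_nf <;>
      simp [hs, mul_comm]
  have htr : Matrix.trace (prodRev fun i => !![h, s / conj (β i); s / β i, 1])
      = Matrix.trace (prodRev A) := by
    have := prodRev_conj P Q hQP (fun i => !![h, s / conj (β i); s / β i, 1])
    simp only [key] at this
    rw [this, Matrix.trace_mul_cycle, hQP, Matrix.one_mul]
  set c : Fin (N + 1) → ℂ := fun i => ((Real.sqrt (1 - ‖(β i)⁻¹‖ ^ 2) : ℂ))⁻¹ with hcdef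
  have hsz : (fun i => szego h ((β i)⁻¹)) = fun i => c i • A i := by
    funext i; rfl
  have hc0 : ∀ i, c i ≠ 0 := by
    intro i
    have h1 : ‖(β i)⁻¹‖ < 1 := by
      rw [norm_inv]
      exact inv_lt_one_of_one_lt₀ (hβ i)
    have h2 : (0:ℝ) < 1 - ‖(β i)⁻¹‖ ^ 2 := by
      nlinarith [norm_nonneg ((β i)⁻¹)]
    have : Real.sqrt (1 - ‖(β i)⁻¹‖ ^ 2) ≠ 0 := by positivity
    exact inv_ne_zero (Complex.ofReal_ne_zero.mpr this)
  have hprod : (∏ i, c i) ≠ 0 := Finset.prod_ne_zero_iff.2 fun i _ => hc0 i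
  rw [htr, hsz, prodRev_smul, Matrix.trace_smul, smul_eq_mul, mul_eq_zero]
  constructor
  · intro h1; right; exact h1
  · rintro (h1 | h1)
    · exact absurd h1 hprod
    · exact h1
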